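/- Let f : ℂ → ℂ, let x_0, …, x_{i-1} be pairwise distinct complex numbers with i ≥ 1, let d_0, …, d_i be complex numbers, define A_m, B_m by the Wallis recurrence A_{-2} = 0, B_{-2} = 1, A_{-1} = 1, B_{-1} = 0, A_m = d_m·A_{m-1} + (X − x_{m-1})·A_{m-2}, B_m = d_m·B_{m-1} + (X − x_{m-1})·B_{m-2}, and set R_m(x) = f(x)B_m(x) − A_m(x). If x* ∈ ℂ satisfies x* ∉ {x_0, …, x_{i-1}}, then R_{i-1}(x*) and R_i(x*) do not both vanish. -/
import Mathlib


open Polynomial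

/-- Wallis numerator polynomials of the Thiele-type continued fraction
`d₀ + (x − x₀)/(d₁ + (x − x₁)/(d₂ + …))`, with index shifted by 2:
`wA d xs 0 = A₋₂ = 0`, `wA d xs 1 = A₋₁ = 1`, `wA d xs (m+2) = A_m`. -/
noncomputable def wA (d xs : ℕ → ℂ) : ℕ → ℂ[X]
  | 0 => 0
  | 1 => 1
  | 2 => C (d 0)
  | (m + 3) => C (d (m + 1)) * wA d xs (m + 2) + (X - C (xs m)) * wA d xs (m + 1)

/-- Wallis denominator polynomials, with index shifted by 2:
`wB d xs 0 = B₋₂ = 1`, `wB d xs 1 = B₋₁ = 0`, `wB d xs (m+2) = B_m`. -/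
noncomputable def wB (d xs : ℕ → ℂ) : ℕ → ℂ[X]
  | 0 => 1
  | 1 => 0
  | 2 => 1
  | (m + 3) => C (d (m + 1)) * wB d xs (m + 2) + (X - C (xs m)) * wB d xs (m + 1)

/-- The linearized residual `R_m(x) = f(x)·B_m(x) − A_m(x)` of the `m`th convergent of a
Thiele-type continued fraction (index shifted by 2, so `linRes f d xs x (m+2) = R_m(x)`,
`linRes f d xs x 1 = R_{-1}(x) = −1`, `linRes f d xs x 0 = R_{-2}(x) = f(x)`). -/
noncomputable def linRes (f : ℂ → ℂ) (d xs : ℕ → ℂ) (x : ℂ) (k : ℕ) : ℂ :=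
  f x * (wB d xs k).eval x - (wA d xs k).eval x

/-- Away from the interpolation points, the linearized residuals `R_{i-1}` and `R_i` of two
consecutive Thiele convergents cannot vanish simultaneously: if `x_0, …, x_{i-1}` are
pairwise distinct and `x* ∉ {x_0, …, x_{i-1}}`, then `R_{i-1}(x*) ≠ 0` or `R_i(x*) ≠ 0`. -/

lemma wallis_det (d xs : ℕ → ℂ) : ∀ k : ℕ,
    wA d xs (k + 2) * wB d xs (k + 1) - wA d xs (k + 1) * wB d xs (k + 2) =
      (-1) ^ (k + 1) * ∏ j ∈ Finset.range k, (X - C (xs j))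
  | 0 => by simp [wA, wB]
  | (k + 1) => by
    have ih := wallis_det d xs k
    show wA d xs (k + 3) * wB d xs (k + 2) - wA d xs (k + 2) * wB d xs (k + 3) = _
    rw [show wA d xs (k + 3) = C (d (k + 1)) * wA d xs (k + 2) + (X - C (xs k)) * wA d xs (k + 1) from rfl,
        show wB d xs (k + 3) = C (d (k + 1)) * wB d xs (k + 2) + (X - C (xs k)) * wB d xs (k + 1) from rfl,
        Finset.prod_range_succ]
    ring_nf
    ring_nf at ih
    linear_combination (-(X : ℂ[X]) + C (xs k)) * ih

theorem thiele_residuals_not_both_zero (i : ℕ) (hi : 1 ≤ i) (f : ℂ → ℂ) (d xs : ℕ → ℂ)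
    (hdist : ∀ j < i, ∀ k < i, xs j = xs k → j = k)
    (xstar : ℂ) (hx : ∀ j < i, xstar ≠ xs j) :
    linRes f d xs xstar (i + 1) ≠ 0 ∨ linRes f d xs xstar (i + 2) ≠ 0 := by
  by_contra h
  push_neg at h
  obtain ⟨h1, h2⟩ := h
  unfold linRes at h1 h2
  have hdet := congrArg (Polynomial.eval xstar) (wallis_det d xs i)
  simp only [Polynomial.eval_sub, Polynomial.eval_mul, Polynomial.eval_pow, Polynomial.eval_neg,
    Polynomial.eval_one, Polynomial.eval_prod, Polynomial.eval_X, Polynomial.eval_C] at hdet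
  have hz : (wA d xs (i + 2)).eval xstar * (wB d xs (i + 1)).eval xstar -
      (wA d xs (i + 1)).eval xstar * (wB d xs (i + 2)).eval xstar = 0 := by
    linear_combination (wB d xs (i + 2)).eval xstar * h1 - (wB d xs (i + 1)).eval xstar * h2
  rw [hz] at hdet
  have hp : (∏ j ∈ Finset.range i, (xstar - xs j)) ≠ 0 := by
    apply Finset.prod_ne_zero_iff.mpr
    intro j hj
    exact sub_ne_zero_of_ne (hx j (Finset.mem_range.mp hj))
  have : ((-1 : ℂ)) ^ (i + 1) ≠ 0 := by
    exact pow_ne_zero (i + 1) (by norm_num : (-1 : ℂ) ≠ 0)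
  exact (mul_ne_zero this hp) hdet.symm
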